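/- If a ∈ L¹(Δ,μ_Δ) ∩ S₀(Δ) and ξ ∈ S₀(G), then the Bochner integral π_Δ(a)ξ := ∫_Δ a(z)·(π(z)ξ) dμ_Δ(z) (an element of L²(G)) belongs to S₀(G). -/

import Mathlib

/- Time-frequency analysis on a locally compact abelian (multiplicatively written) group `H`.
`PontryaginDual H` is the dual group (continuous characters into the circle group) with the
compact-open topology.  `L²(H)` is `MeasureTheory.Lp ℂ 2 μ` for a Haar measure `μ` on `H`. -/

open MeasureTheory ComplexConjugate

noncomputable section

namespace Gabor

variable {H : Type*} [CommGroup H] [TopologicalSpace H] [IsTopologicalGroup H]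
  [MeasurableSpace H] [BorelSpace H]

/-- The function defining the time-frequency shift `π(x,ω)ξ : t ↦ ω(t)·ξ(t·x⁻¹)`
(the group is written multiplicatively, so `t·x⁻¹` is "`t - x`") lies in `L²`. -/
theorem tf_memℒp (μ : Measure H) [μ.IsMulRightInvariant]
    (z : H × PontryaginDual H) (ξ : Lp ℂ 2 μ) :
    MemLp (fun t => (z.2 t : ℂ) * ξ (t * z.1⁻¹)) 2 μ := by
  have hmp : MeasurePreserving (fun t : H => t * z.1⁻¹) μ μ :=
    measurePreserving_mul_right μ z.1⁻¹
  have h1 : MemLp (fun t => ξ (t * z.1⁻¹)) 2 μ :=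
    (Lp.memLp ξ).comp_measurePreserving hmp
  have hω : Continuous fun t : H => (z.2 t : ℂ) :=
    continuous_subtype_val.comp (map_continuous z.2)
  refine MemLp.of_le h1 (hω.aestronglyMeasurable.mul h1.1) ?_
  filter_upwards with t
  rw [norm_mul]
  have h : ‖(z.2 t : ℂ)‖ = 1 := Circle.norm_coe (z.2 t)
  simp only [h, one_mul, le_refl]

/-- The time-frequency shift `π(z) = π(x,ω) : L²(H) → L²(H)`, `(π(x,ω)ξ)(t) = ω(t)·ξ(t·x⁻¹)`. -/
def tf (μ : Measure H) [μ.IsMulRightInvariant]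
    (z : H × PontryaginDual H) (ξ : Lp ℂ 2 μ) : Lp ℂ 2 μ :=
  (tf_memℒp μ z ξ).toLp _

/-- `stft μ ξ η z` is the inner product `⟨ξ, π(z)η⟩` of the paper (which is linear in `ξ` and
conjugate-linear in `π(z)η`; Mathlib's `inner` is conjugate-linear in its first argument). -/
def stft (μ : Measure H) [μ.IsMulRightInvariant] (ξ η : Lp ℂ 2 μ)
    (z : H × PontryaginDual H) : ℂ :=
  @inner ℂ _ _ (tf μ z η) ξ

variable [MeasurableSpace (PontryaginDual H)]

/-- Membership in the Feichtinger algebra `S₀(H)`: `∫_{H×Ĥ} |⟨ξ, π(z)ξ⟩| dz < ∞`. -/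
def IsS0 (μ : Measure H) [μ.IsMulRightInvariant]
    (μd : Measure (PontryaginDual H)) (ξ : Lp ℂ 2 μ) : Prop :=
  ∫⁻ z : H × PontryaginDual H, (‖stft μ ξ ξ z‖₊ : ENNReal) ∂(μ.prod μd) < ⊤

/-- The Gabor system `(π(z)η)_{z ∈ Λ}` is a Bessel family with Bessel bound `D`:
`∫_Λ |⟨ξ, π(z)η⟩|² dμ_Λ(z) ≤ D·‖ξ‖₂²` for all `ξ ∈ L²(H)`. -/
def IsBesselBound (μ : Measure H) [μ.IsMulRightInvariant]
    (Λ : Set (H × PontryaginDual H)) (μΛ : Measure Λ)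
    (η : Lp ℂ 2 μ) (D : ℝ) : Prop :=
  ∀ ξ : Lp ℂ 2 μ,
    ∫⁻ z : Λ, (‖stft μ ξ η (z : H × PontryaginDual H)‖₊ : ENNReal) ^ 2 ∂μΛ ≤
      ENNReal.ofReal D * (‖ξ‖₊ : ENNReal) ^ 2

/-- The Gabor system `(π(z)η)_{z ∈ Λ}` is a Bessel family. -/
def IsBessel (μ : Measure H) [μ.IsMulRightInvariant]
    (Λ : Set (H × PontryaginDual H)) (μΛ : Measure Λ)
    (η : Lp ℂ 2 μ) : Prop :=
  ∃ D : ℝ, 0 < D ∧ IsBesselBound μ Λ μΛ η D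

/-- The square `‖η‖_{B_Λ}²` of the Bessel norm of `η`, i.e.
`sup_{‖ξ‖₂=1} ∫_Λ |⟨ξ, π(z)η⟩|² dμ_Λ(z)`, as a value in `[0,∞]`. -/
def besselSq (μ : Measure H) [μ.IsMulRightInvariant]
    (Λ : Set (H × PontryaginDual H)) (μΛ : Measure Λ)
    (η : Lp ℂ 2 μ) : ENNReal :=
  ⨆ ξ : {ξ : Lp ℂ 2 μ // ‖ξ‖ = 1},
    ∫⁻ z : Λ, (‖stft μ (ξ : Lp ℂ 2 μ) η (z : H × PontryaginDual H)‖₊ : ENNReal) ^ 2 ∂μΛ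

/-- The concrete realization of the Heisenberg module `E_Λ(H)` inside `L²(H)`: all `η ∈ L²(H)`
generating a Bessel family over `Λ` which are approximated arbitrarily well, in the Bessel
norm, by elements of the Feichtinger algebra `S₀(H)`. -/
def heisSet (μ : Measure H) [μ.IsMulRightInvariant]
    (μd : Measure (PontryaginDual H))
    (Λ : Set (H × PontryaginDual H)) (μΛ : Measure Λ) : Set (Lp ℂ 2 μ) :=
  {η | IsBessel μ Λ μΛ η ∧
    ∀ ε : ℝ, 0 < ε → ∃ ζ : Lp ℂ 2 μ, IsS0 μ μd ζ ∧
      besselSq μ Λ μΛ (η - ζ) ≤ ENNReal.ofReal (ε ^ 2)}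

end Gabor

namespace Gabor

variable {H : Type*} [CommGroup H] [TopologicalSpace H] [IsTopologicalGroup H]
  [MeasurableSpace H] [BorelSpace H]

theorem tf_coeFn (μ : Measure H) [μ.IsMulRightInvariant] (z : H × PontryaginDual H)
    (ξ : Lp ℂ 2 μ) : tf μ z ξ =ᵐ[μ] fun t => (z.2 t : ℂ) * ξ (t * z.1⁻¹) :=
  (tf_memℒp μ z ξ).coeFn_toLp

theorem comp_mul_right_ae (μ : Measure H) [μ.IsMulRightInvariant] (c : H)
    {f g : H → ℂ} (h : f =ᵐ[μ] g) :
    (fun t => f (t * c)) =ᵐ[μ] fun t => g (t * c) :=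
  (measurePreserving_mul_right μ c).quasiMeasurePreserving.ae_eq_comp h

theorem tf_add (μ : Measure H) [μ.IsMulRightInvariant] (z : H × PontryaginDual H)
    (ξ η : Lp ℂ 2 μ) : tf μ z (ξ + η) = tf μ z ξ + tf μ z η := by
  apply Lp.ext (p := 2) (μ := μ)
  have h4 := comp_mul_right_ae μ z.1⁻¹ (Lp.coeFn_add ξ η)
  filter_upwards [tf_coeFn μ z (ξ + η), tf_coeFn μ z ξ, tf_coeFn μ z η, h4,
    Lp.coeFn_add (tf μ z ξ) (tf μ z η)] with t e1 e2 e3 e4 e5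
  rw [e1, e5, Pi.add_apply, e2, e3, e4, Pi.add_apply, mul_add]

theorem tf_smul (μ : Measure H) [μ.IsMulRightInvariant] (z : H × PontryaginDual H)
    (c : ℂ) (ξ : Lp ℂ 2 μ) : tf μ z (c • ξ) = c • tf μ z ξ := by
  apply Lp.ext (p := 2) (μ := μ)
  have h4 := comp_mul_right_ae μ z.1⁻¹ (Lp.coeFn_smul c ξ)
  filter_upwards [tf_coeFn μ z (c • ξ), tf_coeFn μ z ξ, h4,
    Lp.coeFn_smul c (tf μ z ξ)] with t e1 e2 e4 e5
  rw [e1, e5, Pi.smul_apply, e2, e4, Pi.smul_apply, smul_eq_mul, smul_eq_mul]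
  ring

theorem norm_tf (μ : Measure H) [μ.IsMulRightInvariant] (z : H × PontryaginDual H)
    (ξ : Lp ℂ 2 μ) : ‖tf μ z ξ‖ = ‖ξ‖ := by
  rw [tf, Lp.norm_toLp]
  have h1 : eLpNorm (fun t => (z.2 t : ℂ) * ξ (t * z.1⁻¹)) 2 μ
      = eLpNorm ((⇑ξ) ∘ fun t => t * z.1⁻¹) 2 μ := by
    apply eLpNorm_congr_norm_ae
    filter_upwards with t
    rw [Function.comp_apply, norm_mul]
    have h : ‖(z.2 t : ℂ)‖ = 1 := Circle.norm_coe (z.2 t)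
    simp only [h, one_mul]
  rw [h1, eLpNorm_comp_measurePreserving (Lp.aestronglyMeasurable ξ)
    (measurePreserving_mul_right μ z.1⁻¹), Lp.norm_def]

def tfL (μ : Measure H) [μ.IsMulRightInvariant] (z : H × PontryaginDual H) :
    Lp ℂ 2 μ →L[ℂ] Lp ℂ 2 μ :=
  LinearMap.mkContinuous
    { toFun := tf μ z
      map_add' := tf_add μ z
      map_smul' := tf_smul μ z } 1 (fun ξ => by simp [norm_tf])

@[simp] theorem tfL_apply (μ : Measure H) [μ.IsMulRightInvariant]
    (z : H × PontryaginDual H) (ξ : Lp ℂ 2 μ) : tfL μ z ξ = tf μ z ξ := rfl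

theorem tf_one (μ : Measure H) [μ.IsMulRightInvariant] (ξ : Lp ℂ 2 μ) :
    tf μ 1 ξ = ξ := by
  apply Lp.ext (p := 2) (μ := μ)
  filter_upwards [tf_coeFn μ 1 ξ] with t ht
  simpa [show ((1 : PontryaginDual H) t) = 1 from rfl] using ht

theorem tf_comp (μ : Measure H) [μ.IsMulRightInvariant] (w v : H × PontryaginDual H)
    (ξ : Lp ℂ 2 μ) :
    tf μ w (tf μ v ξ) = ((v.2 w.1 : Circle) : ℂ)⁻¹ • tf μ (w * v) ξ := by
  apply Lp.ext (p := 2) (μ := μ)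
  have h2 := comp_mul_right_ae μ w.1⁻¹ (tf_coeFn μ v ξ)
  filter_upwards [tf_coeFn μ w (tf μ v ξ), h2,
    Lp.coeFn_smul (((v.2 w.1 : Circle) : ℂ)⁻¹) (tf μ (w * v) ξ),
    tf_coeFn μ (w * v) ξ] with t e1 e2 e3 e4
  rw [e1, e2, e3, Pi.smul_apply, e4]
  have hv : ((v.2 (t * w.1⁻¹) : Circle) : ℂ) = (v.2 t : ℂ) * ((v.2 w.1 : Circle) : ℂ)⁻¹ := by
    rw [map_mul, map_inv]
    push_cast
    ring
  have hpt : t * w.1⁻¹ * v.1⁻¹ = t * ((w * v).1)⁻¹ := by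
    simp [mul_inv_rev, mul_assoc, mul_comm]
  have hch : ((w * v).2 t : ℂ) = (w.2 t : ℂ) * (v.2 t : ℂ) := by
    rw [Prod.snd_mul, show (w.2 * v.2) t = w.2 t * v.2 t from rfl, Circle.coe_mul]
  rw [hv, hpt, hch, smul_eq_mul]
  ring

theorem inner_tf_tf (μ : Measure H) [μ.IsMulRightInvariant] (z : H × PontryaginDual H)
    (ξ η : Lp ℂ 2 μ) : (inner ℂ (tf μ z ξ) (tf μ z η) : ℂ) = inner ℂ ξ η := by
  rw [L2.inner_def, L2.inner_def,
    ← integral_mul_right_eq_self (fun s => (inner ℂ (ξ s) (η s) : ℂ)) z.1⁻¹]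
  apply integral_congr_ae
  filter_upwards [tf_coeFn μ z ξ, tf_coeFn μ z η] with t e1 e2
  rw [RCLike.inner_apply, RCLike.inner_apply, e1, e2, map_mul, mul_mul_mul_comm]
  have hc : (starRingEnd ℂ) ((z.2 t : Circle) : ℂ) * ((z.2 t : Circle) : ℂ) = 1 := by
    rw [← Circle.coe_inv_eq_conj, ← Circle.coe_mul, inv_mul_cancel, Circle.coe_one]
  rw [mul_comm ((z.2 t : Circle) : ℂ), hc, one_mul]

theorem nnnorm_circle (c : Circle) : ‖(c : ℂ)‖₊ = 1 :=
  NNReal.eq (by rw [coe_nnnorm, NNReal.coe_one]; exact Circle.norm_coe c)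

theorem nnnorm_inner_tf (μ : Measure H) [μ.IsMulRightInvariant]
    (u v : H × PontryaginDual H) (ξ η : Lp ℂ 2 μ) :
    ‖(inner ℂ (tf μ u ξ) (tf μ v η) : ℂ)‖₊ = ‖(inner ℂ ξ (tf μ (u⁻¹ * v) η) : ℂ)‖₊ := by
  conv_lhs => rw [← inner_tf_tf μ u⁻¹ (tf μ u ξ) (tf μ v η)]
  rw [tf_comp, tf_comp, inv_mul_cancel, tf_one, inner_smul_left, inner_smul_right,
    nnnorm_mul, nnnorm_mul]
  simp [nnnorm_circle, RCLike.nnnorm_conj]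

end Gabor

open Gabor

/-- If `a ∈ L¹(Δ,μΔ) ∩ S₀(Δ)` and `ξ ∈ S₀(G)`, then the Bochner integral
`π_Δ(a)ξ := ∫_Δ a(z)·(π(z)ξ) dμΔ(z)` (an element of `L²(G)`) belongs to `S₀(G)`.
Here `Δ` is a closed subgroup of `G × Ĝ` with Haar measure `μΔ`, itself a second countable
locally compact abelian group, so that the Feichtinger algebra `S₀(Δ)` makes sense (with
respect to a Haar measure `μΔd` on the dual of `Δ`). -/
theorem integrated_action_maps_feichtinger_to_feichtinger
    {G : Type*} [CommGroup G] [TopologicalSpace G] [IsTopologicalGroup G]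
    [LocallyCompactSpace G] [T2Space G] [SecondCountableTopology G]
    [MeasurableSpace G] [BorelSpace G]
    (μ : Measure G) [μ.IsHaarMeasure]
    [MeasurableSpace (PontryaginDual G)] [BorelSpace (PontryaginDual G)]
    (μd : Measure (PontryaginDual G)) [μd.IsHaarMeasure]
    (Δ : Subgroup (G × PontryaginDual G))
    (hΔclosed : IsClosed (Δ : Set (G × PontryaginDual G)))
    [BorelSpace Δ] (μΔ : Measure Δ) [μΔ.IsHaarMeasure]
    [MeasurableSpace (PontryaginDual Δ)] [BorelSpace (PontryaginDual Δ)]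
    (μΔd : Measure (PontryaginDual Δ)) [μΔd.IsHaarMeasure]
    (a : Δ → ℂ) (ha1 : Integrable a μΔ) (ha2 : MemLp a 2 μΔ)
    (haS0 : IsS0 μΔ μΔd (ha2.toLp a))
    (ξ : Lp ℂ 2 μ) (hξ : IsS0 μ μd ξ) :
    IsS0 μ μd (∫ z : Δ, a z • tf μ (z : G × PontryaginDual G) ξ ∂μΔ) := by
  haveI : SecondCountableTopology (PontryaginDual G) :=
    (ContinuousMonoidHom.isInducing_toContinuousMap G Circle).secondCountableTopology
  haveI : LocallyCompactSpace Δ := hΔclosed.locallyCompactSpace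
  haveI : SecondCountableTopology Δ := Topology.IsInducing.subtypeVal.secondCountableTopology
  haveI : IsLocallyFiniteMeasure μΔ := inferInstance
  haveI : SigmaFinite μΔ := inferInstance
  haveI : SigmaFinite μ := inferInstance
  haveI : SigmaFinite μd := inferInstance
  haveI : SFinite (μ.prod μd) := inferInstance
  haveI : (μ.prod μd).IsMulLeftInvariant := inferInstance
  by_cases hInt : Integrable (fun z : Δ => a z • tf μ (z : G × PontryaginDual G) ξ) μΔ
  case neg =>
    rw [integral_undef hInt]
    unfold IsS0
    have h0 : ∀ w : G × PontryaginDual G, stft μ (0 : Lp ℂ 2 μ) 0 w = 0 := by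
      intro w; rw [stft]; exact inner_zero_right _
    calc ∫⁻ w, (‖stft μ (0 : Lp ℂ 2 μ) 0 w‖₊ : ENNReal) ∂(μ.prod μd)
        = ∫⁻ _, 0 ∂(μ.prod μd) := lintegral_congr fun w => by rw [h0 w]; simp
      _ = 0 := lintegral_zero
      _ < ⊤ := by simp
  case pos =>
  set F : Lp ℂ 2 μ := ∫ z : Δ, a z • tf μ (z : G × PontryaginDual G) ξ ∂μΔ with hF
  -- measurable representative of ξ and the pointwise STFT function
  obtain ⟨g, hgm, hgae⟩ : ∃ g : G → ℂ, StronglyMeasurable g ∧ ⇑ξ =ᵐ[μ] g :=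
    ⟨(Lp.aestronglyMeasurable ξ).mk _, (Lp.aestronglyMeasurable ξ).stronglyMeasurable_mk,
      (Lp.aestronglyMeasurable ξ).ae_eq_mk⟩
  set Vc : G × PontryaginDual G → ℂ :=
    fun v => ∫ t, (starRingEnd ℂ) ((v.2 t : ℂ) * g (t * v.1⁻¹)) * g t ∂μ with hVcdef
  have hstft : ∀ v, stft μ ξ ξ v = Vc v := by
    intro v
    rw [stft, L2.inner_def]
    apply integral_congr_ae
    have h2 := comp_mul_right_ae μ v.1⁻¹ hgae
    filter_upwards [tf_coeFn μ v ξ, hgae, h2] with t e1 e2 e3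
    rw [RCLike.inner_apply, e1, e3, e2]
    exact mul_comm _ _
  have hVm : StronglyMeasurable Vc := by
    apply StronglyMeasurable.integral_prod_right
    apply StronglyMeasurable.mul
    · apply Complex.continuous_conj.comp_stronglyMeasurable
      apply StronglyMeasurable.mul
      · apply Continuous.stronglyMeasurable
        haveI : ContinuousEval (PontryaginDual G) G Circle :=
          ContinuousMonoidHom.instContinuousEval G Circle
        exact continuous_subtype_val.comp
          ((ContinuousEval.continuous_eval (F := PontryaginDual G)).comp
            ((continuous_fst.snd).prodMk continuous_snd))
      · exact hgm.comp_measurable (measurable_snd.mul measurable_fst.fst.inv)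
    · exact hgm.comp_measurable measurable_snd
  set N : G × PontryaginDual G → ENNReal := fun v => (‖Vc v‖₊ : ENNReal) with hNdef
  have hNm : Measurable N := hVm.measurable.enorm
  have hNfin : ∫⁻ v, N v ∂(μ.prod μd) < ⊤ := by
    calc ∫⁻ v, N v ∂(μ.prod μd) = ∫⁻ v, (‖stft μ ξ ξ v‖₊ : ENNReal) ∂(μ.prod μd) :=
          lintegral_congr fun v => by rw [hstft v]
      _ < ⊤ := hξ
  -- measurable representative of a
  obtain ⟨b, hbm, hbae⟩ : ∃ b : Δ → ℂ, StronglyMeasurable b ∧ a =ᵐ[μΔ] b :=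
    ⟨ha1.1.mk _, ha1.1.stronglyMeasurable_mk, ha1.1.ae_eq_mk⟩
  set B : Δ → ENNReal := fun z => (‖b z‖₊ : ENNReal) with hBdef
  have hBm : Measurable B := hbm.measurable.enorm
  have hBfin : ∫⁻ z, B z ∂μΔ < ⊤ := by
    have h : ∫⁻ z, (‖a z‖₊ : ENNReal) ∂μΔ < ⊤ := ha1.2
    refine lt_of_eq_of_lt ?_ h
    apply lintegral_congr_ae
    filter_upwards [hbae] with z hz
    rw [hBdef]; simp only [hz]
  -- the pointwise bound
  have key : ∀ w : G × PontryaginDual G, (‖stft μ F F w‖₊ : ENNReal) ≤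
      ∫⁻ z : Δ, B z * ∫⁻ z' : Δ,
        B z' * N ((z : G × PontryaginDual G)⁻¹ * w * (z' : G × PontryaginDual G)) ∂μΔ ∂μΔ := by
    intro w
    have hInt2 : Integrable (fun z : Δ => a z • tf μ w (tf μ (z : G × PontryaginDual G) ξ)) μΔ := by
      have h := (tfL μ w).integrable_comp hInt
      refine h.congr (Filter.Eventually.of_forall fun z => ?_)
      simp only [_root_.map_smul, tfL_apply]
    have step2 : tf μ w F = ∫ z : Δ, a z • tf μ w (tf μ (z : G × PontryaginDual G) ξ) ∂μΔ := by
      have h := (tfL μ w).integral_comp_comm hInt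
      rw [← tfL_apply μ w F, hF, ← h]
      apply integral_congr_ae
      filter_upwards with z
      simp only [_root_.map_smul, tfL_apply]
    have step1 : stft μ F F w
        = ∫ z : Δ, a z * (inner ℂ (tf μ w F) (tf μ (z : G × PontryaginDual G) ξ) : ℂ) ∂μΔ := by
      rw [stft]
      conv_lhs => rw [hF]
      rw [← integral_inner hInt (tf μ w F)]
      apply integral_congr_ae
      filter_upwards with z
      rw [inner_smul_right]
    have step3 : ∀ z : Δ, (inner ℂ (tf μ (z : G × PontryaginDual G) ξ) (tf μ w F) : ℂ)
        = ∫ z' : Δ, a z' * (inner ℂ (tf μ (z : G × PontryaginDual G) ξ)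
            (tf μ w (tf μ (z' : G × PontryaginDual G) ξ)) : ℂ) ∂μΔ := by
      intro z
      rw [step2, ← integral_inner hInt2]
      apply integral_congr_ae
      filter_upwards with z'
      rw [inner_smul_right]
    have n1 : ∀ z z' : Δ, ‖(inner ℂ (tf μ (z : G × PontryaginDual G) ξ)
        (tf μ w (tf μ (z' : G × PontryaginDual G) ξ)) : ℂ)‖₊
        = ‖Vc ((z : G × PontryaginDual G)⁻¹ * w * (z' : G × PontryaginDual G))‖₊ := by
      intro z z'
      rw [tf_comp, inner_smul_right, nnnorm_mul, nnnorm_inv, nnnorm_circle, inv_one, one_mul,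
        nnnorm_inner_tf μ ((z : G × PontryaginDual G)) (w * (z' : G × PontryaginDual G)) ξ ξ,
        ← inner_conj_symm, RCLike.nnnorm_conj, ← mul_assoc,
        show (inner ℂ (tf μ ((z : G × PontryaginDual G)⁻¹ * w * (z' : G × PontryaginDual G)) ξ) ξ : ℂ)
          = stft μ ξ ξ ((z : G × PontryaginDual G)⁻¹ * w * (z' : G × PontryaginDual G)) from rfl,
        hstft]
    calc (‖stft μ F F w‖₊ : ENNReal)
        = ‖∫ z : Δ, a z * (inner ℂ (tf μ w F) (tf μ (z : G × PontryaginDual G) ξ) : ℂ) ∂μΔ‖₊ := by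
          rw [step1]
      _ ≤ ∫⁻ z : Δ, ‖a z * (inner ℂ (tf μ w F) (tf μ (z : G × PontryaginDual G) ξ) : ℂ)‖₊ ∂μΔ :=
          enorm_integral_le_lintegral_enorm _
      _ ≤ ∫⁻ z : Δ, B z * ∫⁻ z' : Δ,
            B z' * N ((z : G × PontryaginDual G)⁻¹ * w * (z' : G × PontryaginDual G)) ∂μΔ ∂μΔ := by
          apply lintegral_mono_ae
          filter_upwards [hbae] with z hz
          rw [nnnorm_mul, ENNReal.coe_mul, hz]
          refine mul_le_mul_right ?_ (B z)
          have hsymm : ‖(inner ℂ (tf μ w F) (tf μ (z : G × PontryaginDual G) ξ) : ℂ)‖₊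
              = ‖(inner ℂ (tf μ (z : G × PontryaginDual G) ξ) (tf μ w F) : ℂ)‖₊ := by
            rw [← inner_conj_symm, RCLike.nnnorm_conj]
          rw [hsymm, step3 z]
          calc (‖∫ z' : Δ, a z' * (inner ℂ (tf μ (z : G × PontryaginDual G) ξ)
                  (tf μ w (tf μ (z' : G × PontryaginDual G) ξ)) : ℂ) ∂μΔ‖₊ : ENNReal)
              ≤ ∫⁻ z' : Δ, ‖a z' * (inner ℂ (tf μ (z : G × PontryaginDual G) ξ)
                  (tf μ w (tf μ (z' : G × PontryaginDual G) ξ)) : ℂ)‖₊ ∂μΔ :=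
                enorm_integral_le_lintegral_enorm _
            _ ≤ ∫⁻ z' : Δ,
                  B z' * N ((z : G × PontryaginDual G)⁻¹ * w * (z' : G × PontryaginDual G)) ∂μΔ := by
                apply lintegral_mono_ae
                filter_upwards [hbae] with z' hz'
                rw [nnnorm_mul, ENNReal.coe_mul, hz', n1]
  -- Fubini and translation invariance
  unfold IsS0
  have hIN : ∫⁻ v, N v ∂(μ.prod μd) ≠ ⊤ := hNfin.ne
  have htrans : ∀ c d : G × PontryaginDual G,
      ∫⁻ w, N (c * w * d) ∂(μ.prod μd) = ∫⁻ v, N v ∂(μ.prod μd) := by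
    intro c d
    calc ∫⁻ w, N (c * w * d) ∂(μ.prod μd) = ∫⁻ w, N ((c * d) * w) ∂(μ.prod μd) :=
          lintegral_congr fun w => by rw [mul_right_comm]
      _ = ∫⁻ v, N v ∂(μ.prod μd) := lintegral_mul_left_eq_self N (c * d)
  have hm2 : ∀ z : Δ, Measurable (Function.uncurry fun (w : G × PontryaginDual G) (z' : Δ) =>
      B z' * N ((z : G × PontryaginDual G)⁻¹ * w * (z' : G × PontryaginDual G))) := by
    intro z
    exact (hBm.comp measurable_snd).mul (hNm.comp
      ((measurable_const.mul measurable_fst).mul (measurable_subtype_coe.comp measurable_snd)))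
  have hswap2 : ∀ z : Δ, ∫⁻ w, ∫⁻ z' : Δ,
      B z' * N ((z : G × PontryaginDual G)⁻¹ * w * (z' : G × PontryaginDual G)) ∂μΔ ∂(μ.prod μd)
      = (∫⁻ z' : Δ, B z' ∂μΔ) * ∫⁻ v, N v ∂(μ.prod μd) := by
    intro z
    rw [lintegral_lintegral_swap (hm2 z).aemeasurable]
    calc ∫⁻ z' : Δ, ∫⁻ w,
          B z' * N ((z : G × PontryaginDual G)⁻¹ * w * (z' : G × PontryaginDual G)) ∂(μ.prod μd) ∂μΔ
        = ∫⁻ z' : Δ, B z' * ∫⁻ v, N v ∂(μ.prod μd) ∂μΔ := by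
          apply lintegral_congr; intro z'
          rw [lintegral_const_mul' _ _ ENNReal.coe_ne_top, htrans]
      _ = (∫⁻ z' : Δ, B z' ∂μΔ) * ∫⁻ v, N v ∂(μ.prod μd) :=
          lintegral_mul_const' _ _ hIN
  have hm1 : Measurable (Function.uncurry fun (w : G × PontryaginDual G) (z : Δ) =>
      B z * ∫⁻ z' : Δ,
        B z' * N ((z : G × PontryaginDual G)⁻¹ * w * (z' : G × PontryaginDual G)) ∂μΔ) := by
    apply Measurable.mul (hBm.comp measurable_snd)
    apply Measurable.lintegral_prod_right
    exact (hBm.comp measurable_snd).mul (hNm.comp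
      (((measurable_subtype_coe.comp measurable_fst.snd).inv.mul measurable_fst.fst).mul
        (measurable_subtype_coe.comp measurable_snd)))
  calc ∫⁻ w, (‖stft μ F F w‖₊ : ENNReal) ∂(μ.prod μd)
      ≤ ∫⁻ w, ∫⁻ z : Δ, B z * ∫⁻ z' : Δ,
          B z' * N ((z : G × PontryaginDual G)⁻¹ * w * (z' : G × PontryaginDual G)) ∂μΔ ∂μΔ
          ∂(μ.prod μd) := lintegral_mono key
    _ = ∫⁻ z : Δ, ∫⁻ w, B z * ∫⁻ z' : Δ,
          B z' * N ((z : G × PontryaginDual G)⁻¹ * w * (z' : G × PontryaginDual G)) ∂μΔ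
          ∂(μ.prod μd) ∂μΔ := lintegral_lintegral_swap hm1.aemeasurable
    _ = ∫⁻ z : Δ, B z * ((∫⁻ z' : Δ, B z' ∂μΔ) * ∫⁻ v, N v ∂(μ.prod μd)) ∂μΔ := by
          apply lintegral_congr; intro z
          rw [lintegral_const_mul' _ _ ENNReal.coe_ne_top, hswap2 z]
    _ = (∫⁻ z : Δ, B z ∂μΔ) * ((∫⁻ z' : Δ, B z' ∂μΔ) * ∫⁻ v, N v ∂(μ.prod μd)) :=
          lintegral_mul_const' _ _ (ENNReal.mul_ne_top hBfin.ne hIN)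
    _ < ⊤ := ENNReal.mul_lt_top hBfin (ENNReal.mul_lt_top hBfin hNfin)
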